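/- The function h defined by h(k) = Γ(k+1/2)/Γ(k) for k ≥ 1 and h(k) = 0 for k ≤ 0 is non-decreasing on ℤ, sub-additive (h(x+y) ≤ h(x) + h(y) for all x, y ∈ ℤ), and satisfies h(k) ~ √k as k → ∞, i.e. lim_{k→∞} h(k)/√k = 1. -/

import Mathlib

open Filter

/-- The harmonic function `h(k) = Γ(k+1/2)/Γ(k)` for `k ≥ 1`, `h(k) = 0` for `k ≤ 0`. -/
noncomputable def hFun : ℤ → ℝ := fun k =>
  if 1 ≤ k then Real.Gamma ((k : ℝ) + 1 / 2) / Real.Gamma (k : ℝ) else 0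

namespace HFunAux

open Finset Real

/-- Explicit product form. -/
noncomputable def g (n : ℕ) : ℝ :=
  Real.sqrt π / 2 * ∏ i ∈ range n, (2 * (i : ℝ) + 3) / (2 * i + 2)

lemma g_succ (n : ℕ) : g (n + 1) = g n * ((2 * (n : ℝ) + 3) / (2 * n + 2)) := by
  unfold g
  rw [prod_range_succ, mul_assoc]

lemma g_pos (n : ℕ) : 0 < g n := by
  unfold g
  apply mul_pos
  · positivity
  · apply prod_pos
    intro i _
    positivity

lemma g_mono : Monotone g := by
  apply monotone_nat_of_le_succ
  intro n
  rw [g_succ]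
  nth_rewrite 1 [← mul_one (g n)]
  apply mul_le_mul_of_nonneg_left _ (g_pos n).le
  rw [le_div_iff₀ (by positivity)]
  nlinarith [Nat.cast_nonneg (α := ℝ) n]

lemma hFun_nat (n : ℕ) : hFun ((n : ℤ) + 1) = g n := by
  induction n with
  | zero =>
      have h32 : Real.Gamma ((1 : ℝ) + 1 / 2) = Real.sqrt π / 2 := by
        rw [show (1 : ℝ) + 1 / 2 = 1 / 2 + 1 by norm_num,
          Real.Gamma_add_one (by norm_num), Real.Gamma_one_half_eq]
        ring
      simp only [Nat.cast_zero, zero_add, hFun, g, range_zero, prod_empty, mul_one]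
      rw [if_pos le_rfl]
      push_cast
      rw [h32, Real.Gamma_one]
      norm_num
  | succ n ih =>
      have hn1 : (0 : ℝ) < (n : ℝ) + 1 := by positivity
      simp only [hFun] at ih ⊢
      rw [if_pos (by omega)] at ih ⊢
      push_cast at ih ⊢
      rw [show (n : ℝ) + 1 + 1 + 1 / 2 = ((n : ℝ) + 1 + 1 / 2) + 1 by ring,
        Real.Gamma_add_one (by positivity),
        show (n : ℝ) + 1 + 1 = ((n : ℝ) + 1) + 1 by ring,
        Real.Gamma_add_one (by positivity)]
      rw [g_succ, ← ih]
      have hΓ : Real.Gamma ((n : ℝ) + 1) ≠ 0 := (Real.Gamma_pos_of_pos hn1).ne'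
      field_simp
      ring

lemma g_sq_W (n : ℕ) : g n ^ 2 * Real.Wallis.W n = π / 4 * (2 * n + 1) := by
  induction n with
  | zero =>
      show g 0 ^ 2 * Real.Wallis.W 0 = π / 4 * (2 * (0 : ℕ) + 1)
      rw [show Real.Wallis.W 0 = 1 from by simp [Real.Wallis.W]]
      rw [show g 0 = Real.sqrt π / 2 from by simp [g]]
      rw [div_pow, Real.sq_sqrt Real.pi_nonneg]
      norm_num
  | succ n ih =>
      have h1 : (2 * (n : ℝ) + 1) ≠ 0 := by positivity
      have h2 : (2 * (n : ℝ) + 2) ≠ 0 := by positivity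
      have h3 : (2 * (n : ℝ) + 3) ≠ 0 := by positivity
      have hg : g n ≠ 0 := (g_pos n).ne'
      have hW : Real.Wallis.W n = π / 4 * (2 * (n : ℝ) + 1) / g n ^ 2 := by
        field_simp
        linarith [ih]
      rw [g_succ, Real.Wallis.W_succ, hW]
      push_cast
      field_simp
      ring

lemma step1 (n : ℕ) : g n ^ 2 * ((n : ℝ) + 2) ≤ g (n + 1) ^ 2 * ((n : ℝ) + 1) := by
  have h2 : (2 * (n : ℝ) + 2) ≠ 0 := by positivity
  rw [← sub_nonneg]
  have key : g (n + 1) ^ 2 * ((n : ℝ) + 1) - g n ^ 2 * ((n : ℝ) + 2)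
      = g n ^ 2 * (((n : ℝ) + 1) / (2 * (n : ℝ) + 2) ^ 2) := by
    rw [g_succ, mul_pow, div_pow]
    field_simp
    ring
  rw [key]
  positivity

lemma step2 (n : ℕ) : g (n + 1) ^ 2 * ((n : ℝ) + 3 / 4) ≤ g n ^ 2 * ((n : ℝ) + 7 / 4) := by
  have h2 : (2 * (n : ℝ) + 2) ≠ 0 := by positivity
  rw [← sub_nonneg]
  have key : g n ^ 2 * ((n : ℝ) + 7 / 4) - g (n + 1) ^ 2 * ((n : ℝ) + 3 / 4)
      = g n ^ 2 * ((1 / 4) / (2 * (n : ℝ) + 2) ^ 2) := by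
    rw [g_succ, mul_pow, div_pow]
    field_simp
    ring
  rw [key]
  positivity

/-- `u n = g n ^ 2 / (n+1)`, which is `h(n+1)²/(n+1)`. -/
noncomputable def u (n : ℕ) : ℝ := g n ^ 2 / ((n : ℝ) + 1)

lemma u_mono : Monotone u := by
  apply monotone_nat_of_le_succ
  intro n
  unfold u
  push_cast
  rw [div_le_div_iff₀ (by positivity) (by positivity)]
  nlinarith [step1 n]

lemma tendsto_u : Tendsto u atTop (nhds 1) := by
  have hW := Real.Wallis.tendsto_W_nhds_pi_div_two
  have heq : ∀ n : ℕ, u n = (π / Real.Wallis.W n) * (1 / 2 - 1 / (4 * (n : ℝ) + 4)) := by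
    intro n
    have hWpos := Real.Wallis.W_pos n
    have h4 : (0 : ℝ) < 4 * (n : ℝ) + 4 := by positivity
    have key := g_sq_W n
    unfold u
    have hgsq : g n ^ 2 = π / 4 * (2 * n + 1) / Real.Wallis.W n := by
      field_simp at key ⊢
      linarith [key]
    rw [hgsq]
    field_simp
    ring
  rw [funext heq]
  have h1 : Tendsto (fun n : ℕ => π / Real.Wallis.W n) atTop (nhds (π / (π / 2))) :=
    tendsto_const_nhds.div hW (by positivity)
  have h2 : Tendsto (fun n : ℕ => 1 / (4 * (n : ℝ) + 4)) atTop (nhds 0) := by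
    simp only [one_div]
    apply Filter.Tendsto.inv_tendsto_atTop
    apply Filter.tendsto_atTop_add_const_right
    apply Filter.Tendsto.const_mul_atTop (by norm_num : (0:ℝ) < 4)
    exact tendsto_natCast_atTop_atTop
  have h3 : Tendsto (fun n : ℕ => 1 / 2 - 1 / (4 * (n : ℝ) + 4)) atTop (nhds (1 / 2 - 0)) :=
    tendsto_const_nhds.sub h2
  have := h1.mul h3
  have hπ : π / (π / 2) * (1 / 2 - 0) = 1 := by
    field_simp
    norm_num
  rwa [hπ] at this

/-- `v n = g n ^ 2 / (n + 3/4)`. -/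
noncomputable def v (n : ℕ) : ℝ := g n ^ 2 / ((n : ℝ) + 3 / 4)

lemma v_anti : Antitone v := by
  apply antitone_nat_of_succ_le
  intro n
  unfold v
  push_cast
  rw [div_le_div_iff₀ (by positivity) (by positivity)]
  nlinarith [step2 n]

lemma tendsto_v : Tendsto v atTop (nhds 1) := by
  have heq : ∀ n : ℕ, v n = u n * (1 + (1 / 4) / ((n : ℝ) + 3 / 4)) := by
    intro n
    have h1 : (0 : ℝ) < (n : ℝ) + 1 := by positivity
    have h2 : (0 : ℝ) < (n : ℝ) + 3 / 4 := by positivity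
    unfold u v
    field_simp
    ring
  rw [funext heq]
  have h2 : Tendsto (fun n : ℕ => (1 : ℝ) / 4 / ((n : ℝ) + 3 / 4)) atTop (nhds 0) := by
    apply Filter.Tendsto.div_atTop tendsto_const_nhds
    apply Filter.tendsto_atTop_add_const_right
    exact tendsto_natCast_atTop_atTop
  have h3 : Tendsto (fun n : ℕ => (1 : ℝ) + (1 / 4) / ((n : ℝ) + 3 / 4)) atTop
      (nhds (1 + 0)) := tendsto_const_nhds.add h2
  have h4 := tendsto_u.mul h3
  norm_num at h4
  exact h4

lemma g_sq_le (n : ℕ) : g n ^ 2 ≤ (n : ℝ) + 1 := by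
  have h := u_mono.ge_of_tendsto tendsto_u n
  unfold u at h
  rw [div_le_one (by positivity)] at h
  exact h

lemma le_g_sq (n : ℕ) : (n : ℝ) + 3 / 4 ≤ g n ^ 2 := by
  have h := v_anti.le_of_tendsto tendsto_v n
  unfold v at h
  rw [le_div_iff₀ (by positivity)] at h
  linarith

lemma hFun_eq (k : ℤ) (hk : 1 ≤ k) : hFun k = g (k - 1).toNat := by
  have hk' : k = ((k - 1).toNat : ℤ) + 1 := by omega
  rw [show hFun k = hFun (((k - 1).toNat : ℤ) + 1) from by rw [← hk'], hFun_nat]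

lemma hFun_nonneg (k : ℤ) : 0 ≤ hFun k := by
  by_cases hk : 1 ≤ k
  · rw [hFun_eq k hk]; exact (g_pos _).le
  · simp [hFun, hk]

lemma toNat_cast (k : ℤ) (hk : 1 ≤ k) : (((k - 1).toNat : ℕ) : ℝ) = (k : ℝ) - 1 := by
  have h := Int.toNat_of_nonneg (show (0 : ℤ) ≤ k - 1 by omega)
  exact_mod_cast congrArg (Int.cast : ℤ → ℝ) h

lemma hFun_sq_le (k : ℤ) (hk : 1 ≤ k) : hFun k ^ 2 ≤ (k : ℝ) := by
  rw [hFun_eq k hk]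
  have := g_sq_le (k - 1).toNat
  rw [toNat_cast k hk] at this
  linarith

lemma le_hFun_sq (k : ℤ) (hk : 1 ≤ k) : (k : ℝ) - 1 / 4 ≤ hFun k ^ 2 := by
  rw [hFun_eq k hk]
  have := le_g_sq (k - 1).toNat
  rw [toNat_cast k hk] at this
  linarith

lemma hFun_le_sqrt (k : ℤ) (hk : 1 ≤ k) : hFun k ≤ Real.sqrt (k : ℝ) := by
  have h := hFun_sq_le k hk
  calc hFun k = Real.sqrt (hFun k ^ 2) := (Real.sqrt_sq (hFun_nonneg k)).symm
    _ ≤ Real.sqrt (k : ℝ) := Real.sqrt_le_sqrt h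

lemma sqrt_le_hFun (k : ℤ) (hk : 1 ≤ k) : Real.sqrt ((k : ℝ) - 1 / 4) ≤ hFun k := by
  have h := le_hFun_sq k hk
  calc Real.sqrt ((k : ℝ) - 1 / 4) ≤ Real.sqrt (hFun k ^ 2) := Real.sqrt_le_sqrt h
    _ = hFun k := Real.sqrt_sq (hFun_nonneg k)

lemma hFun_monotone : Monotone hFun := by
  intro a b hab
  by_cases hb : 1 ≤ b
  · by_cases ha : 1 ≤ a
    · rw [hFun_eq a ha, hFun_eq b hb]
      exact g_mono (Int.toNat_le_toNat (by omega))
    · rw [show hFun a = 0 by simp [hFun, ha]]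
      exact hFun_nonneg b
  · have ha : ¬ 1 ≤ a := by omega
    simp [hFun, ha, hb]

end HFunAux

/-- `h` is non-decreasing on `ℤ`, sub-additive, and `h(k) ~ √k` as `k → ∞`. -/
theorem hFun_monotone_subadditive_asymptotic :
    Monotone hFun ∧
    (∀ x y : ℤ, hFun (x + y) ≤ hFun x + hFun y) ∧
    Tendsto (fun k : ℕ => hFun (k : ℤ) / Real.sqrt (k : ℝ)) atTop (nhds 1) := by
  open HFunAux in
  refine ⟨hFun_monotone, ?_, ?_⟩
  · intro x y
    by_cases hx : 1 ≤ x
    · by_cases hy : 1 ≤ y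
      · -- both at least 1
        have hxR : (1 : ℝ) ≤ (x : ℝ) := by exact_mod_cast hx
        have hyR : (1 : ℝ) ≤ (y : ℝ) := by exact_mod_cast hy
        have ha0' : (0 : ℝ) ≤ (x : ℝ) - 1 / 4 := by linarith
        have hb0' : (0 : ℝ) ≤ (y : ℝ) - 1 / 4 := by linarith
        have hsa : Real.sqrt ((x : ℝ) - 1 / 4) ^ 2 = (x : ℝ) - 1 / 4 := Real.sq_sqrt ha0'
        have hsb : Real.sqrt ((y : ℝ) - 1 / 4) ^ 2 = (y : ℝ) - 1 / 4 := Real.sq_sqrt hb0'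
        have hprod : (1 / 4 : ℝ) ≤ Real.sqrt ((x : ℝ) - 1 / 4) * Real.sqrt ((y : ℝ) - 1 / 4) := by
          have h14 : Real.sqrt (1 / 4 : ℝ) = 1 / 2 := by
            rw [show (1 / 4 : ℝ) = (1 / 2) ^ 2 by norm_num, Real.sqrt_sq (by norm_num)]
          have h1 : (1 / 2 : ℝ) ≤ Real.sqrt ((x : ℝ) - 1 / 4) := by
            rw [← h14]; exact Real.sqrt_le_sqrt (by linarith)
          have h2 : (1 / 2 : ℝ) ≤ Real.sqrt ((y : ℝ) - 1 / 4) := by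
            rw [← h14]; exact Real.sqrt_le_sqrt (by linarith)
          nlinarith [Real.sqrt_nonneg ((x : ℝ) - 1 / 4), Real.sqrt_nonneg ((y : ℝ) - 1 / 4)]
        have hsum : ((x : ℝ) + y) ≤
            (Real.sqrt ((x : ℝ) - 1 / 4) + Real.sqrt ((y : ℝ) - 1 / 4)) ^ 2 := by
          have hexp : (Real.sqrt ((x : ℝ) - 1 / 4) + Real.sqrt ((y : ℝ) - 1 / 4)) ^ 2
              = Real.sqrt ((x : ℝ) - 1 / 4) ^ 2 + Real.sqrt ((y : ℝ) - 1 / 4) ^ 2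
                + 2 * (Real.sqrt ((x : ℝ) - 1 / 4) * Real.sqrt ((y : ℝ) - 1 / 4)) := by ring
          rw [hexp, hsa, hsb]
          linarith
        have key : Real.sqrt ((x : ℝ) + y)
            ≤ Real.sqrt ((x : ℝ) - 1 / 4) + Real.sqrt ((y : ℝ) - 1 / 4) := by
          calc Real.sqrt ((x : ℝ) + y)
              ≤ Real.sqrt ((Real.sqrt ((x : ℝ) - 1 / 4) + Real.sqrt ((y : ℝ) - 1 / 4)) ^ 2) :=
                Real.sqrt_le_sqrt hsum
            _ = _ := Real.sqrt_sq (by positivity)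
        have h1 : hFun (x + y) ≤ Real.sqrt ((x : ℝ) + y) := by
          have := hFun_le_sqrt (x + y) (by omega)
          push_cast at this
          exact this
        have h2 : Real.sqrt ((x : ℝ) - 1 / 4) ≤ hFun x := sqrt_le_hFun x hx
        have h3 : Real.sqrt ((y : ℝ) - 1 / 4) ≤ hFun y := sqrt_le_hFun y hy
        linarith
      · -- y ≤ 0
        have h0 : hFun y = 0 := by simp [hFun, hy]
        rw [h0]
        have := hFun_monotone (show x + y ≤ x by omega)
        linarith
    · -- x ≤ 0
      have h0 : hFun x = 0 := by simp [hFun, hx]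
      rw [h0]
      have := hFun_monotone (show x + y ≤ y by omega)
      linarith
  · -- asymptotic
    rw [← Filter.tendsto_add_atTop_iff_nat 1]
    have heq : ∀ n : ℕ, hFun ((n + 1 : ℕ) : ℤ) / Real.sqrt ((n + 1 : ℕ) : ℝ)
        = Real.sqrt (u n) := by
      intro n
      have h1 : hFun ((n + 1 : ℕ) : ℤ) = g n := by
        push_cast
        exact hFun_nat n
      have h2 : ((n + 1 : ℕ) : ℝ) = (n : ℝ) + 1 := by push_cast; ring
      rw [h1, h2]
      unfold u
      rw [Real.sqrt_div (by positivity), Real.sqrt_sq (g_pos n).le]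
    rw [funext heq]
    have := (Real.continuous_sqrt.tendsto 1).comp tendsto_u
    simpa [Function.comp_def] using this
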